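/- Fix T > 0, m ∈ ℝ, d ∈ ℕ, and β ≥ 0. Define u^β : [0,T] × ℝ^d → ℝ by u^β(t,x) = ((e^{2T−t} − e^t)/(2(e^{2T−t} + e^t))) ‖x − m𝟙‖² − (β² d / 2) · ln(2e^T / (e^{2T−t} + e^t)). Then u^β solves −∂_t u^β + (1/2)‖∇u^β‖² − (1/2)‖x − m𝟙‖² = (β²/2) Δu^β on [0,T] × ℝ^d with u^β(T,x) = 0. -/

import Mathlib

open Real Set

open RealInnerProductSpace in
private lemma aux_fderiv_hjb {d : ℕ} (c : EuclideanSpace ℝ (Fin d)) (a K : ℝ)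
    (x : EuclideanSpace ℝ (Fin d)) :
    HasFDerivAt (fun y => a * ‖y - c‖ ^ 2 - K) ((2 * a) • (innerSL ℝ (x - c))) x := by
  have h1 : HasFDerivAt (fun y : EuclideanSpace ℝ (Fin d) => y - c)
      (ContinuousLinearMap.id ℝ _) x := (hasFDerivAt_id x).sub_const c
  have h2 := (h1.inner ℝ h1)
  have h3 : (fun y : EuclideanSpace ℝ (Fin d) => a * ⟪y - c, y - c⟫ - K)
      = fun y => a * ‖y - c‖ ^ 2 - K := by
    funext y; rw [real_inner_self_eq_norm_sq]
  have h4 := (h2.const_mul a).sub_const K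
  rw [h3] at h4
  refine h4.congr_fderiv ?_
  ext v
  simp only [ContinuousLinearMap.smul_apply, ContinuousLinearMap.coe_comp', Function.comp_apply,
    ContinuousLinearMap.prod_apply, ContinuousLinearMap.coe_id', id_eq, fderivInnerCLM_apply,
    innerSL_apply_apply, smul_eq_mul]
  rw [real_inner_comm v]
  ring

/-- The Laplacian of `f : ℝ^d → ℝ`, as the sum of the second derivatives along the
standard coordinate directions. -/
noncomputable def laplacian {d : ℕ} (f : EuclideanSpace ℝ (Fin d) → ℝ)
    (x : EuclideanSpace ℝ (Fin d)) : ℝ :=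
  ∑ i : Fin d,
    fderiv ℝ (fun y => fderiv ℝ f y (EuclideanSpace.single i (1:ℝ))) x
      (EuclideanSpace.single i (1:ℝ))

/-- The function
`u^β(t,x) = ((e^{2T-t}-e^t)/(2(e^{2T-t}+e^t)))‖x - m𝟙‖² - (β²d/2) ln(2e^T/(e^{2T-t}+e^t))`
solves the viscous HJB equation
`-∂ₜu + (1/2)‖∇u‖² - (1/2)‖x - m𝟙‖² = (β²/2) Δu` with `u(T,·) = 0`. -/
theorem closed_form_viscous_HJB
    (T : ℝ) (hT : 0 < T) (m : ℝ) (d : ℕ) (β : ℝ) (hβ : 0 ≤ β)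
    (mOne : EuclideanSpace ℝ (Fin d)) (hmOne : ∀ i, mOne i = m)
    (uβ : ℝ → EuclideanSpace ℝ (Fin d) → ℝ)
    (huβ : ∀ t x, uβ t x =
      (Real.exp (2 * T - t) - Real.exp t) / (2 * (Real.exp (2 * T - t) + Real.exp t))
        * ‖x - mOne‖ ^ 2
      - (β ^ 2 * d / 2) *
        Real.log (2 * Real.exp T / (Real.exp (2 * T - t) + Real.exp t))) :
    (∀ t ∈ Icc (0:ℝ) T, ∀ x : EuclideanSpace ℝ (Fin d),
      -(deriv (fun τ => uβ τ x) t) + (1 / 2) * ‖gradient (uβ t) x‖ ^ 2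
        - (1 / 2) * ‖x - mOne‖ ^ 2
      = (β ^ 2 / 2) * laplacian (uβ t) x) ∧
    ∀ x : EuclideanSpace ℝ (Fin d), uβ T x = 0 := by
  constructor
  · intro t _ x
    have hA : (0:ℝ) < Real.exp (2 * T - t) := Real.exp_pos _
    have hB : (0:ℝ) < Real.exp t := Real.exp_pos _
    have hAB : (0:ℝ) < Real.exp (2 * T - t) + Real.exp t := by positivity
    set A : ℝ := Real.exp (2 * T - t) with hAdef
    set B : ℝ := Real.exp t with hBdef
    set a : ℝ := (A - B) / (2 * (A + B)) with hadef
    set K : ℝ := (β ^ 2 * d / 2) * Real.log (2 * Real.exp T / (A + B)) with hKdef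
    have hfun : uβ t = fun y => a * ‖y - mOne‖ ^ 2 - K := by
      funext y; rw [huβ]
    -- gradient
    have hgrad : gradient (uβ t) x = (2 * a) • (x - mOne) := by
      have h : HasGradientAt (uβ t) ((2 * a) • (x - mOne)) x := by
        rw [hasGradientAt_iff_hasFDerivAt]
        have h := aux_fderiv_hjb mOne a K x
        rw [← hfun] at h
        refine h.congr_fderiv ?_
        ext v
        simp only [InnerProductSpace.toDual_apply_apply, ContinuousLinearMap.smul_apply,
          innerSL_apply_apply, smul_eq_mul, real_inner_smul_left]
      exact h.gradient
    have hgradnorm : ‖gradient (uβ t) x‖ ^ 2 = (2 * a) ^ 2 * ‖x - mOne‖ ^ 2 := by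
      rw [hgrad, norm_smul, Real.norm_eq_abs, mul_pow, sq_abs]
    -- Laplacian
    have hlap : laplacian (uβ t) x = (d : ℝ) * (2 * a) := by
      unfold laplacian
      have hstep : ∀ i : Fin d,
          fderiv ℝ (fun y => fderiv ℝ (uβ t) y (EuclideanSpace.single i (1:ℝ))) x
            (EuclideanSpace.single i (1:ℝ)) = 2 * a := by
        intro i
        have hfe : (fun y => fderiv ℝ (uβ t) y (EuclideanSpace.single i (1:ℝ)))
            = fun y => (2 * a) * (y i - m) := by
          funext y
          have h := aux_fderiv_hjb mOne a K y
          rw [← hfun] at h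
          rw [h.fderiv]
          simp only [ContinuousLinearMap.smul_apply, innerSL_apply_apply, smul_eq_mul]
          rw [show ((1:ℝ) : ℝ) = ((1:ℝ) : ℝ) from rfl]
          rw [EuclideanSpace.inner_single_right]
          simp [PiLp.sub_apply, hmOne]
        rw [hfe]
        have h2 : HasFDerivAt (fun y : EuclideanSpace ℝ (Fin d) => (2 * a) * (y i - m))
            ((2 * a) • (EuclideanSpace.proj i : EuclideanSpace ℝ (Fin d) →L[ℝ] ℝ)) x := by
          exact (((EuclideanSpace.proj (𝕜 := ℝ) i).hasFDerivAt (x := x)).sub_const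
            m).const_mul (2 * a)
        rw [h2.fderiv]
        simp [EuclideanSpace.single_apply]
      rw [Finset.sum_congr rfl fun i _ => hstep i]
      simp [mul_comm]
    -- time derivative
    have hA' : HasDerivAt (fun τ => Real.exp (2 * T - τ)) (-A) t := by
      have h := (((hasDerivAt_id t).const_sub (2 * T)).exp)
      simpa using h
    have hB' : HasDerivAt (fun τ => Real.exp τ) B t := Real.hasDerivAt_exp t
    have hnum : HasDerivAt (fun τ => Real.exp (2 * T - τ) - Real.exp τ) (-A - B) t :=
      hA'.sub hB'
    have hden : HasDerivAt (fun τ => 2 * (Real.exp (2 * T - τ) + Real.exp τ))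
        (2 * (-A + B)) t := (hA'.add hB').const_mul 2
    have hden0 : 2 * (Real.exp (2 * T - t) + Real.exp t) ≠ 0 := by positivity
    have ha' : HasDerivAt
        (fun τ => (Real.exp (2 * T - τ) - Real.exp τ) /
          (2 * (Real.exp (2 * T - τ) + Real.exp τ)))
        (((-A - B) * (2 * (A + B)) - (A - B) * (2 * (-A + B))) / (2 * (A + B)) ^ 2) t :=
      hnum.div hden hden0
    have hlog : HasDerivAt (fun τ => Real.log (Real.exp (2 * T - τ) + Real.exp τ))
        ((-A + B) / (A + B)) t := by
      exact (hA'.add hB').log (by positivity)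
    have hC : HasDerivAt
        (fun τ => Real.log (2 * Real.exp T) - Real.log (Real.exp (2 * T - τ) + Real.exp τ))
        (-((-A + B) / (A + B))) t := hlog.const_sub _
    have hfun2 : (fun τ => uβ τ x) = fun τ =>
        (Real.exp (2 * T - τ) - Real.exp τ) / (2 * (Real.exp (2 * T - τ) + Real.exp τ))
          * ‖x - mOne‖ ^ 2
        - (β ^ 2 * d / 2) *
          (Real.log (2 * Real.exp T) - Real.log (Real.exp (2 * T - τ) + Real.exp τ)) := by
      funext τ
      rw [huβ, Real.log_div (by positivity) (by positivity)]
    have hu : HasDerivAt (fun τ => uβ τ x)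
        ((((-A - B) * (2 * (A + B)) - (A - B) * (2 * (-A + B))) / (2 * (A + B)) ^ 2)
          * ‖x - mOne‖ ^ 2
         - (β ^ 2 * d / 2) * (-((-A + B) / (A + B)))) t := by
      rw [hfun2]
      exact (ha'.mul_const _).sub (hC.const_mul _)
    rw [hu.deriv, hgradnorm, hlap, hadef]
    have hABne : A + B ≠ 0 := ne_of_gt hAB
    field_simp
    ring
  · intro x
    rw [huβ]
    have h1 : 2 * T - T = T := by ring
    rw [h1, sub_self, zero_div, zero_mul, zero_sub, neg_eq_zero,
      show Real.exp T + Real.exp T = 2 * Real.exp T by ring,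
      div_self (by positivity), Real.log_one, mul_zero]
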